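/- Let U = ∑_{ν∈G} u(ν)·ν^{−1} with u(ν) ∈ ℤ_{(p)} satisfy ∑_{ν∈G} u(ν)·α^{ν^{−1}} ≡ 0 (mod p·Z_{K,(p)}), where α ∈ Z_K and p ∤ |G|. Then for every absolutely irreducible character φ of G (field of values C), setting u_φ(ν) := (φ(1)/n)·∑_{τ∈G} φ(τ^{−1})·u(ντ) ∈ Z_{C,(p)}, one has ∑_{ν∈G} u_φ(ν)·α^{ν^{−1}} ≡ 0 (mod p·Z_{KC,(p)}), i.e. the φ-component U_φ := e_φ·U also annihilates α modulo p. -/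

import Mathlib

open NumberField

noncomputable section

/-- `x` is a `p`-integer of `K`, i.e. `x` lies in the localization `Z_{K,(p)}` of the
ring of integers of `K` away from `p` (denominators prime to `p`). -/
def IsPInt (K : Type*) [Field K] [NumberField K] (p : ℕ) (x : K) : Prop :=
  ∃ (a : 𝓞 K) (d : ℤ), ¬ (p : ℤ) ∣ d ∧ (d : K) * x = (a : K)

/-- `x ∈ I · Z_{K,(p)}`, for an ideal `I` of the ring of integers of `K`. -/
def MemPIdeal (K : Type*) [Field K] [NumberField K] (p : ℕ) (I : Ideal (𝓞 K)) (x : K) : Prop :=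
  ∃ (a : 𝓞 K) (d : ℤ), ¬ (p : ℤ) ∣ d ∧ a ∈ I ∧ (d : K) * x = (a : K)

/-- `x ∈ K^×` is prime to `p` : it is a unit at every place of `K` above `p`. -/
def PrimeToP (K : Type*) [Field K] [NumberField K] (p : ℕ) (x : K) : Prop :=
  IsPInt K p x ∧ IsPInt K p x⁻¹

/-- the prime `p` is unramified in `K`. -/
def UnramifiedIn (K : Type*) [Field K] [NumberField K] (p : ℕ) : Prop :=
  ∀ P : Ideal (𝓞 K), P.IsPrime → (p : 𝓞 K) ∈ P →
    Ideal.ramificationIdx' (Ideal.span {(p : ℤ)}) P = 1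

/-- `np` is the common residue degree of the primes of `K` above `p`. -/
def ResidueDeg (K : Type*) [Field K] [NumberField K] (p np : ℕ) : Prop :=
  ∀ P : Ideal (𝓞 K), P.IsPrime → (p : 𝓞 K) ∈ P →
    Ideal.inertiaDeg' (Ideal.span {(p : ℤ)}) P = np

/-- a rational number is a `p`-integer, i.e. lies in `ℤ_(p)`. -/
def RatIsPInt (p : ℕ) (q : ℚ) : Prop :=
  ∃ a d : ℤ, ¬ (p : ℤ) ∣ d ∧ (d : ℚ) * q = (a : ℚ)

/-- the generalized Fermat quotient `α_p(x) = (x^{p^{n_p}-1} - 1)/p`. -/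
def alphaP (K : Type*) [Field K] [NumberField K] (p np : ℕ) (x : K) : K :=
  (x ^ (p ^ np - 1) - 1) / p

/-- The matrix representation `ρ` of `G = Gal(K/ℚ)` with coefficients in `M` is absolutely
irreducible (Burnside criterion: its image generates the full matrix algebra). -/
def AbsIrred (K M : Type*) [Field K] [NumberField K] [Field M] [NumberField M]
    (m : ℕ) (ρ : (K ≃ₐ[ℚ] K) →* Matrix (Fin m) (Fin m) M) : Prop :=
  Algebra.adjoin M (Set.range fun g : K ≃ₐ[ℚ] K => ρ g) = ⊤

/-- `D` is the decomposition group of the prime `P` of `M`: the set of automorphisms of `M`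
stabilizing `P`. -/
def IsDecompGroup (M : Type*) [Field M] [NumberField M]
    (P : Ideal (𝓞 M)) (D : Finset (M ≃ₐ[ℚ] M)) : Prop :=
  ∀ s : M ≃ₐ[ℚ] M, s ∈ D ↔
    ∀ a : 𝓞 M, a ∈ P → ∀ b : 𝓞 M, (b : M) = s (a : M) → b ∈ P

/-- Coefficient at `ν` of the `φ`-component `U_φ = e_φ·U` of `U = ∑_ν u(ν)·ν⁻¹` with rational
coefficients: `u_φ(ν) = (φ(1)/n)·∑_{τ∈G} φ(τ⁻¹)·u(ντ)`, where `φ = tr ∘ ρ`. -/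
def eCompQ (K M : Type*) [Field K] [NumberField K] [Field M] [NumberField M]
    (m : ℕ) (ρ : (K ≃ₐ[ℚ] K) →* Matrix (Fin m) (Fin m) M)
    (u : (K ≃ₐ[ℚ] K) → ℚ) (ν : K ≃ₐ[ℚ] K) : M :=
  ((m : M) / (Fintype.card (K ≃ₐ[ℚ] K) : M)) *
    ∑ τ : K ≃ₐ[ℚ] K, Matrix.trace (ρ τ⁻¹) * (u (ν * τ) : M)

/-- Coefficient at `ν` of the `φ`-component `W_φ = e_φ·W` of `W = ∑_ν w(ν)·ν⁻¹` with
coefficients in `M`. -/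
def eCompM (K M : Type*) [Field K] [NumberField K] [Field M] [NumberField M]
    (m : ℕ) (ρ : (K ≃ₐ[ℚ] K) →* Matrix (Fin m) (Fin m) M)
    (w : (K ≃ₐ[ℚ] K) → M) (ν : K ≃ₐ[ℚ] K) : M :=
  ((m : M) / (Fintype.card (K ≃ₐ[ℚ] K) : M)) *
    ∑ τ : K ≃ₐ[ℚ] K, Matrix.trace (ρ τ⁻¹) * w (ν * τ)

/-- The local `θ`-regulator `Δ_p^θ(α) = ∏_{φ'∣θ} P^{φ'}(…, α^ν, …)`, where the absolutely
irreducible constituents `φ' = φ^s` of `θ` are indexed by the decomposition group `D` and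
`P^{φ^s}(…, α^ν, …) = det(∑_ν α^ν · ρ^s(ν⁻¹))`. -/
def DeltaTheta (K M : Type*) [Field K] [NumberField K] [Field M] [NumberField M]
    [Algebra K M] (m : ℕ) (ρ : (K ≃ₐ[ℚ] K) →* Matrix (Fin m) (Fin m) M)
    (D : Finset (M ≃ₐ[ℚ] M)) (α : K) : M :=
  ∏ s ∈ D, Matrix.det (∑ ν : K ≃ₐ[ℚ] K, algebraMap K M (ν α) • (ρ ν⁻¹).map s)

section AuxST7

open Polynomial

/-- Any root of the characteristic polynomial of a matrix `A` with `A ^ k = 1` satisfies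
`r ^ k = 1`. -/
lemma st7_root_pow_eq_one {F : Type*} [Field F] {m k : ℕ} (A : Matrix (Fin m) (Fin m) F)
    (hA : A ^ k = 1) {r : F} (hr : A.charpoly.IsRoot r) : r ^ k = 1 := by
  classical
  have hdet : ((r • (1 : Matrix (Fin m) (Fin m) F)) - A).det = 0 := by
    have h1 : (Polynomial.evalRingHom r) A.charpoly
        = ((Matrix.charmatrix A).map (Polynomial.evalRingHom r)).det :=
      RingHom.map_det _ _
    have h2 : (Matrix.charmatrix A).map (Polynomial.evalRingHom r)
        = (r • (1 : Matrix (Fin m) (Fin m) F)) - A := by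
      ext i j
      by_cases h : i = j
      · subst h
        simp [Matrix.charmatrix_apply_eq, Matrix.map_apply, Matrix.sub_apply,
          Matrix.smul_apply, Matrix.one_apply_eq, smul_eq_mul]
      · simp [Matrix.charmatrix_apply_ne _ _ _ h, Matrix.map_apply, Matrix.sub_apply,
          Matrix.smul_apply, Matrix.one_apply_ne h, smul_eq_mul]
    rw [h2] at h1
    rw [← h1]
    simpa using hr
  obtain ⟨v, hv0, hv⟩ := (Matrix.exists_mulVec_eq_zero_iff).2 hdet
  have hAv : A.mulVec v = r • v := by
    rw [Matrix.sub_mulVec, sub_eq_zero] at hv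
    rw [← hv, Matrix.smul_mulVec, Matrix.one_mulVec]
  have key : ∀ j : ℕ, (A ^ j).mulVec v = r ^ j • v := by
    intro j
    induction j with
    | zero => simp [Matrix.one_mulVec]
    | succ j ih =>
        rw [pow_succ, pow_succ, ← Matrix.mulVec_mulVec, hAv]
        have : (A ^ j).mulVec (r • v) = r • ((A ^ j).mulVec v) := by
          rw [Matrix.mulVec_smul]
        rw [this, ih, smul_smul, mul_comm r (r ^ j)]
  have h1 : v = (r ^ k) • v := by
    have := key k
    rw [hA, Matrix.one_mulVec] at this
    exact this
  obtain ⟨i, hi⟩ := Function.ne_iff.mp hv0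
  have h2 : v i = r ^ k * v i := by
    conv_lhs => rw [h1]
    simp [Pi.smul_apply, smul_eq_mul]
  have hi' : v i ≠ 0 := by simpa using hi
  have h3 : r ^ k * v i = 1 * v i := by rw [one_mul, ← h2]
  exact mul_right_cancel₀ hi' h3

/-- The trace of a matrix of finite order over an algebraically closed field is
integral over `ℤ`. -/
lemma st7_trace_isIntegral {F : Type*} [Field F] [IsAlgClosed F] {m k : ℕ} (hk : k ≠ 0)
    (A : Matrix (Fin m) (Fin m) F) (hA : A ^ k = 1) : IsIntegral ℤ A.trace := by
  classical
  rw [Matrix.trace_eq_sum_roots_charpoly]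
  have H : ∀ s : Multiset F, (∀ r ∈ s, IsIntegral ℤ r) → IsIntegral ℤ s.sum := by
    intro s
    induction s using Multiset.induction_on with
    | empty => intro _; simpa using isIntegral_zero
    | cons a t ih =>
        intro h
        rw [Multiset.sum_cons]
        exact (h _ (Multiset.mem_cons_self _ _)).add
          (ih fun r hr => h r (Multiset.mem_cons_of_mem hr))
  refine H _ fun r hr => ?_
  have hroot : A.charpoly.IsRoot r := Polynomial.isRoot_of_mem_roots hr
  have hpow := st7_root_pow_eq_one A hA hroot
  refine ⟨Polynomial.X ^ k - Polynomial.C 1, Polynomial.monic_X_pow_sub_C (1 : ℤ) hk, ?_⟩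
  simp [hpow]

/-- The values of the character of a representation of a finite group are algebraic
integers. -/
lemma st7_char_isIntegral {M : Type*} [Field M] {G : Type*} [Group G] [Fintype G]
    {m : ℕ} (ρ : G →* Matrix (Fin m) (Fin m) M) (g : G) :
    IsIntegral ℤ (Matrix.trace (ρ g)) := by
  classical
  set F := AlgebraicClosure M
  set σ : M →+* F := algebraMap M F with hσ
  have hpow : ((σ.mapMatrix (ρ g)) : Matrix (Fin m) (Fin m) F) ^ Fintype.card G = 1 := by
    rw [← map_pow, ← map_pow, pow_card_eq_one, map_one, map_one]
  have hInt : IsIntegral ℤ (Matrix.trace (σ.mapMatrix (ρ g))) :=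
    st7_trace_isIntegral Fintype.card_ne_zero _ hpow
  have htr : Matrix.trace (σ.mapMatrix (ρ g)) = σ (Matrix.trace (ρ g)) := by
    simp [Matrix.trace, Matrix.diag, RingHom.mapMatrix_apply, Matrix.map_apply, map_sum]
  rw [htr] at hInt
  have hinj : Function.Injective (algebraMap M F) := (algebraMap M F).injective
  exact (isIntegral_algebraMap_iff hinj).mp hInt

variable {L : Type*} [Field L] [NumberField L] {p : ℕ}

lemma st7_not_dvd_one (hp : p.Prime) : ¬ (p : ℤ) ∣ (1 : ℤ) := by
  rw [show (1 : ℤ) = ((1 : ℕ) : ℤ) from rfl, Int.natCast_dvd_natCast, Nat.dvd_one]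
  exact hp.ne_one

lemma st7_isPInt_integer (hp : p.Prime) (a : 𝓞 L) : IsPInt L p (a : L) :=
  ⟨a, 1, st7_not_dvd_one hp, by simp⟩

lemma st7_isPInt_zero (hp : p.Prime) : IsPInt L p 0 := by
  simpa using st7_isPInt_integer (L := L) hp 0

lemma st7_isPInt_add (hp : p.Prime) {x y : L} (hx : IsPInt L p x) (hy : IsPInt L p y) :
    IsPInt L p (x + y) := by
  obtain ⟨a1, d1, hd1, e1⟩ := hx
  obtain ⟨a2, d2, hd2, e2⟩ := hy
  have hpZ : Prime (p : ℤ) := Nat.prime_iff_prime_int.mp hp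
  refine ⟨(d2 : 𝓞 L) * a1 + (d1 : 𝓞 L) * a2, d1 * d2, ?_, ?_⟩
  · intro h
    rcases hpZ.dvd_mul.mp h with h | h
    · exact hd1 h
    · exact hd2 h
  · have hc : ((((d2 : 𝓞 L) * a1 + (d1 : 𝓞 L) * a2 : 𝓞 L)) : L)
        = (d2 : L) * (a1 : L) + (d1 : L) * (a2 : L) := by
      simp only [map_add, map_mul, map_intCast]
    rw [hc]
    push_cast
    linear_combination (d2 : L) * e1 + (d1 : L) * e2

lemma st7_isPInt_mul (hp : p.Prime) {x y : L} (hx : IsPInt L p x) (hy : IsPInt L p y) :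
    IsPInt L p (x * y) := by
  obtain ⟨a1, d1, hd1, e1⟩ := hx
  obtain ⟨a2, d2, hd2, e2⟩ := hy
  have hpZ : Prime (p : ℤ) := Nat.prime_iff_prime_int.mp hp
  refine ⟨a1 * a2, d1 * d2, ?_, ?_⟩
  · intro h
    rcases hpZ.dvd_mul.mp h with h | h
    · exact hd1 h
    · exact hd2 h
  · have hc : (((a1 * a2 : 𝓞 L)) : L) = (a1 : L) * (a2 : L) := by simp only [map_mul]
    rw [hc]
    push_cast
    linear_combination ((d2 : L) * y) * e1 + (a1 : L) * e2

lemma st7_isPInt_sum (hp : p.Prime) {ι : Type*} (s : Finset ι) (g : ι → L)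
    (h : ∀ i ∈ s, IsPInt L p (g i)) : IsPInt L p (∑ i ∈ s, g i) := by
  classical
  induction s using Finset.induction_on with
  | empty => simpa using st7_isPInt_zero (L := L) hp
  | insert a s hni ih =>
      rw [Finset.sum_insert hni]
      exact st7_isPInt_add hp (h _ (Finset.mem_insert_self _ _))
        (ih fun i hi => h i (Finset.mem_insert_of_mem hi))

lemma st7_isPInt_div_nat (hp : p.Prime) (a b : ℕ) (hb : ¬ p ∣ b) (hb0 : b ≠ 0) :
    IsPInt L p ((a : L) / (b : L)) := by
  refine ⟨(a : 𝓞 L), (b : ℤ), ?_, ?_⟩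
  · rwa [Int.natCast_dvd_natCast]
  · have hbL : (b : L) ≠ 0 := Nat.cast_ne_zero.mpr hb0
    push_cast
    field_simp

end AuxST7

/-- Lemma 3.4. If `U = ∑_ν u(ν)·ν⁻¹` with `u(ν) ∈ ℤ_(p)` satisfies
`∑_ν u(ν)·α^{ν⁻¹} ≡ 0 (mod p·Z_{K,(p)})`, `α ∈ Z_K`, `p ∤ |G|`, then for every absolutely
irreducible character `φ` of `G` (realized over `M ⊇ K, C`), the `φ`-component
`U_φ = e_φ·U`, with coefficients `u_φ(ν) = (φ(1)/n)·∑_τ φ(τ⁻¹)·u(ντ)`, also annihilates `α`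
modulo `p` : `∑_ν u_φ(ν)·α^{ν⁻¹} ≡ 0 (mod p·Z_{KC,(p)})`. -/
theorem statement7 (K M : Type*) [Field K] [NumberField K] [IsGalois ℚ K]
    [Field M] [NumberField M] [Algebra K M]
    (m : ℕ) (ρ : (K ≃ₐ[ℚ] K) →* Matrix (Fin m) (Fin m) M)
    (hirr : AbsIrred K M m ρ)
    (p : ℕ) (hp : p.Prime) (hpn : ¬ p ∣ Fintype.card (K ≃ₐ[ℚ] K))
    (hurK : UnramifiedIn K p) (hurM : UnramifiedIn M p)
    (α : 𝓞 K) (u : (K ≃ₐ[ℚ] K) → ℚ) (hu : ∀ ν, RatIsPInt p (u ν))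
    (hrel : IsPInt K p ((∑ ν : K ≃ₐ[ℚ] K, (u ν : K) * ν⁻¹ (α : K)) / p)) :
    IsPInt M p
      ((∑ ν : K ≃ₐ[ℚ] K, eCompQ K M m ρ u ν * algebraMap K M (ν⁻¹ (α : K))) / p) := by
  classical
  set f : K →+* M := (algebraMap K M : K →+* M) with hf
  set S : K := ∑ ν : K ≃ₐ[ℚ] K, (u ν : K) * ν⁻¹ (α : K) with hS
  set c : M := (m : M) / (Fintype.card (K ≃ₐ[ℚ] K) : M) with hc
  -- the image of `τ S` under `f`
  have hfS : ∀ τ : K ≃ₐ[ℚ] K, f (τ S)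
      = ∑ μ : K ≃ₐ[ℚ] K, (u μ : M) * f (τ (μ⁻¹ (α : K))) := by
    intro τ
    rw [hS]
    rw [map_sum, map_sum]
    refine Finset.sum_congr rfl fun μ _ => ?_
    rw [map_mul, map_mul, map_ratCast, map_ratCast]
  -- the key algebraic identity
  have Num : (∑ ν : K ≃ₐ[ℚ] K, eCompQ K M m ρ u ν * algebraMap K M (ν⁻¹ (α : K)))
      = c * ∑ τ : K ≃ₐ[ℚ] K, Matrix.trace (ρ τ⁻¹) * f (τ S) := by
    calc (∑ ν : K ≃ₐ[ℚ] K, eCompQ K M m ρ u ν * algebraMap K M (ν⁻¹ (α : K)))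
        = ∑ ν : K ≃ₐ[ℚ] K, ∑ τ : K ≃ₐ[ℚ] K,
            c * (Matrix.trace (ρ τ⁻¹) * (u (ν * τ) : M) * f (ν⁻¹ (α : K))) := by
          refine Finset.sum_congr rfl fun ν _ => ?_
          show (c * ∑ τ : K ≃ₐ[ℚ] K, Matrix.trace (ρ τ⁻¹) * (u (ν * τ) : M))
              * f (ν⁻¹ (α : K)) = _
          rw [mul_comm c, mul_assoc, Finset.sum_mul]
          refine Finset.sum_congr rfl fun τ _ => ?_
          ring
      _ = ∑ τ : K ≃ₐ[ℚ] K, ∑ ν : K ≃ₐ[ℚ] K,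
            c * (Matrix.trace (ρ τ⁻¹) * (u (ν * τ) : M) * f (ν⁻¹ (α : K))) :=
          Finset.sum_comm
      _ = ∑ τ : K ≃ₐ[ℚ] K, c * (Matrix.trace (ρ τ⁻¹) * f (τ S)) := by
          refine Finset.sum_congr rfl fun τ _ => ?_
          rw [← Finset.mul_sum]
          congr 1
          rw [hfS τ, Finset.mul_sum]
          refine Fintype.sum_equiv (Equiv.mulRight τ) _ _ fun ν => ?_
          show Matrix.trace (ρ τ⁻¹) * (u (ν * τ) : M) * f (ν⁻¹ (α : K))
            = Matrix.trace (ρ τ⁻¹) * ((u (ν * τ) : M) * f (τ ((ν * τ)⁻¹ (α : K))))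
          have hcomp : τ ((ν * τ)⁻¹ (α : K)) = ν⁻¹ (α : K) := by
            have h1 : τ * (ν * τ)⁻¹ = ν⁻¹ := by group
            calc τ ((ν * τ)⁻¹ (α : K)) = (τ * (ν * τ)⁻¹) (α : K) := rfl
              _ = ν⁻¹ (α : K) := by rw [h1]
          rw [hcomp]
          ring
      _ = c * ∑ τ : K ≃ₐ[ℚ] K, Matrix.trace (ρ τ⁻¹) * f (τ S) := by
          rw [Finset.mul_sum]
  have key : (∑ ν : K ≃ₐ[ℚ] K, eCompQ K M m ρ u ν * algebraMap K M (ν⁻¹ (α : K))) / p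
      = c * ∑ τ : K ≃ₐ[ℚ] K, Matrix.trace (ρ τ⁻¹) * (f (τ S) / p) := by
    rw [Num, mul_div_assoc, Finset.sum_div]
    congr 1
    exact Finset.sum_congr rfl fun τ _ => mul_div_assoc _ _ _
  rw [key]
  refine st7_isPInt_mul hp ?_ (st7_isPInt_sum hp _ _ fun τ _ => st7_isPInt_mul hp ?_ ?_)
  · -- `c = m / card G` is a `p`-integer
    exact st7_isPInt_div_nat hp m _ hpn Fintype.card_ne_zero
  · -- the character value is an algebraic integer
    exact st7_isPInt_integer hp ⟨Matrix.trace (ρ τ⁻¹), st7_char_isIntegral ρ τ⁻¹⟩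
  · -- `f (τ S) / p` is a `p`-integer
    obtain ⟨a, d, hd, he⟩ := hrel
    have haM : IsIntegral ℤ (f (τ (a : K))) := by
      have h0 : IsIntegral ℤ ((a : K)) := a.isIntegral_coe
      have h1 : IsIntegral ℤ ((f.comp (τ : K →+* K)) ((a : K))) :=
        h0.map (f.comp (τ : K →+* K)).toIntAlgHom
      simpa using h1
    refine ⟨⟨f (τ (a : K)), haM⟩, d, hd, ?_⟩
    have h1 : f (τ (S / p)) = f (τ S) / p := by
      rw [map_div₀, map_div₀, map_natCast, map_natCast]
    rw [← h1]
    have h2 : (d : K) * (τ (S / p)) = τ (a : K) := by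
      have := congrArg τ he
      rwa [map_mul, map_intCast] at this
    calc (d : M) * f (τ (S / p)) = f ((d : K) * τ (S / p)) := by
          rw [map_mul, map_intCast]
      _ = f (τ (a : K)) := by rw [h2]
      _ = ((⟨f (τ (a : K)), haM⟩ : 𝓞 M) : M) := rfl
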